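/- arXiv:1307.3681 — 2 statements merged into one kernel-verified Lean document; each statement's English description precedes it below -/
import Mathlib

section
/- Let k ≥ 2 and t ≥ k+1 be integers, and define g_{t,k}(x_1, …, x_k) := (x_1+1)^{t−k} + x_2 + ⋯ + x_k, a polynomial in k complex variables with exactly t monomial terms. Then Δ(Amoeba(g_{t,k}), ArchTrop(g_{t,k})) ≥ log(t−k); in particular, for every ε > 0 there exists σ ∈ ArchTrop(g_{t,k}) whose Euclidean distance to every point of Amoeba(g_{t,k}) exceeds log(t−k) − ε. -/
open Pointwise

/-- Evaluation of the Laurent polynomial `f(x) = ∑ i, c i * x^{a i}` at `x ∈ (ℂ∖{0})^n`. -/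
noncomputable def lpoly {n : ℕ} {ι : Type*} [Fintype ι] (c : ι → ℂ) (a : ι → Fin n → ℤ)
    (x : Fin n → ℂ) : ℂ :=
  ∑ i, c i * ∏ j, x j ^ a i j

/-- `Log|x| = (log|x_1|, …, log|x_n|)`. -/
noncomputable def LogAbs {n : ℕ} (x : Fin n → ℂ) : EuclideanSpace ℝ (Fin n) :=
  WithLp.toLp 2 (fun j => Real.log ‖x j‖)

/-- `Amoeba(f) = { Log|x| : x ∈ (ℂ∖{0})^n, f(x) = 0 }`. -/
noncomputable def Amoeba {n : ℕ} {ι : Type*} [Fintype ι] (c : ι → ℂ) (a : ι → Fin n → ℤ) :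
    Set (EuclideanSpace ℝ (Fin n)) :=
  {w | ∃ x : Fin n → ℂ, (∀ j, x j ≠ 0) ∧ lpoly c a x = 0 ∧ w = LogAbs x}

/-- `|c_i| e^{a_i · v}`, the `i`-th tropical term of `f` at `v`. -/
noncomputable def tropTerm {n : ℕ} {ι : Type*} (c : ι → ℂ) (a : ι → Fin n → ℤ)
    (v : EuclideanSpace ℝ (Fin n)) (i : ι) : ℝ :=
  ‖c i‖ * Real.exp (∑ j, (a i j : ℝ) * v j)

/-- `ArchTrop(f)`: the set of `v ∈ ℝ^n` where the maximum of `|c_i| e^{a_i·v}` is attained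
at least twice. -/
noncomputable def ArchTrop {n : ℕ} {ι : Type*} (c : ι → ℂ) (a : ι → Fin n → ℤ) :
    Set (EuclideanSpace ℝ (Fin n)) :=
  {v | ∃ i k : ι, i ≠ k ∧ (∀ l, tropTerm c a v l ≤ tropTerm c a v i) ∧
      tropTerm c a v i = tropTerm c a v k}

/-- Coefficients of `g_{t,k}(x) = (x_1+1)^{t-k} + x_2 + ⋯ + x_k`: binomial coefficients for
the powers of `x_1`, and `1` for each of `x_2, …, x_k`. -/
noncomputable def gCoeff (t k : ℕ) : (Fin (t - k + 1) ⊕ Fin (k - 1)) → ℂ :=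
  Sum.elim (fun i => ((t - k).choose i : ℂ)) (fun _ => 1)

/-- Exponent vectors of `g_{t,k}(x) = (x_1+1)^{t-k} + x_2 + ⋯ + x_k`. -/
def gExp (t k : ℕ) : (Fin (t - k + 1) ⊕ Fin (k - 1)) → Fin k → ℤ :=
  Sum.elim (fun i => fun j => if (j : ℕ) = 0 then ((i : ℕ) : ℤ) else 0)
    (fun i => fun j => if (j : ℕ) = (i : ℕ) + 1 then 1 else 0)

/-! ### Auxiliary lemmas -/

lemma filter_sum {M : Type*} [AddCommMonoid M] (k : ℕ) (hk : 2 ≤ k) (f : Fin k → M) :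
    ∑ i ∈ Finset.univ.filter (fun j : Fin k => 0 < (j : ℕ)), f i
      = ∑ i : Fin (k - 1), f ⟨(i : ℕ) + 1, by have := i.isLt; omega⟩ := by
  refine Finset.sum_nbij' (fun (j : Fin k) => (⟨(j : ℕ) - 1, by have := j.isLt; omega⟩ : Fin (k-1)))
    (fun (i : Fin (k-1)) => (⟨(i : ℕ) + 1, by have := i.isLt; omega⟩ : Fin k)) ?_ ?_ ?_ ?_ ?_
  · intro a ha; exact Finset.mem_univ _
  · intro a _
    simp only [Finset.mem_filter, Finset.mem_univ, true_and]
    omega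
  · intro a ha
    simp only [Finset.mem_filter, Finset.mem_univ, true_and] at ha
    ext; simp; omega
  · intro a _; ext; simp
  · intro a ha
    simp only [Finset.mem_filter, Finset.mem_univ, true_and] at ha
    congr 1; ext; simp; omega

lemma coord_le_dist {n : ℕ} (x y : EuclideanSpace ℝ (Fin n)) (j : Fin n) :
    |x j - y j| ≤ dist x y := by
  rw [EuclideanSpace.dist_eq]
  rw [← Real.sqrt_sq (abs_nonneg (x j - y j))]
  apply Real.sqrt_le_sqrt
  rw [sq_abs]
  have h : (x j - y j)^2 = dist (x j) (y j) ^ 2 := by rw [Real.dist_eq, sq_abs]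
  rw [h]
  exact Finset.single_le_sum (f := fun i => dist (x i) (y i)^2)
    (fun i _ => sq_nonneg _) (Finset.mem_univ j)

lemma eval_g (k t : ℕ) (hk : 2 ≤ k) (htk : k + 1 ≤ t) (x : Fin k → ℂ) :
    lpoly (gCoeff t k) (gExp t k) x =
      (x ⟨0, Nat.lt_of_lt_of_le two_pos hk⟩ + 1) ^ (t - k) +
        ∑ i ∈ Finset.univ.filter (fun j : Fin k => 0 < (j : ℕ)), x i := by
  unfold lpoly gCoeff gExp
  rw [Fintype.sum_sum_type]
  congr 1
  · have step : ∀ i : Fin (t - k + 1),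
        (∏ j : Fin k, x j ^ (if (j : ℕ) = 0 then ((i : ℕ) : ℤ) else 0))
          = x ⟨0, by omega⟩ ^ (i : ℕ) := by
      intro i
      rw [Finset.prod_eq_single (⟨0, by omega⟩ : Fin k)]
      · simp [zpow_natCast]
      · intro j _ hj
        have hj0 : (j : ℕ) ≠ 0 := fun h => hj (Fin.ext h)
        simp [hj0]
      · simp
    simp only [Sum.elim_inl, step]
    rw [add_pow]
    rw [Fin.sum_univ_eq_sum_range (fun i => ((t - k).choose i : ℂ) * x ⟨0, by omega⟩ ^ i)]
    refine Finset.sum_congr rfl fun i _ => ?_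
    rw [one_pow, mul_one, mul_comm]
  · rw [filter_sum k hk x]
    refine Finset.sum_congr rfl fun i _ => ?_
    simp only [Sum.elim_inr, one_mul]
    rw [Finset.prod_eq_single (⟨(i : ℕ) + 1, by have := i.isLt; omega⟩ : Fin k)]
    · simp
    · intro j _ hj
      have hj0 : (j : ℕ) ≠ (i : ℕ) + 1 := fun h => hj (Fin.ext h)
      simp [hj0]
    · simp

/-- The candidate ArchTrop point `σ_N = (log m, -N, …, -N)`. -/
noncomputable def sigm (k t : ℕ) (N : ℝ) : EuclideanSpace ℝ (Fin k) :=
  WithLp.toLp 2 (fun j => if (j : ℕ) = 0 then Real.log (t - k : ℕ) else -N)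

lemma trop_inl (k t : ℕ) (N : ℝ) (hk : 2 ≤ k) (htk : k + 1 ≤ t) (i : Fin (t - k + 1)) :
    tropTerm (gCoeff t k) (gExp t k) (sigm k t N) (Sum.inl i)
      = ((t - k).choose i : ℝ) * ((t - k : ℕ) : ℝ) ^ (i : ℕ) := by
  have hm : 0 < ((t - k : ℕ) : ℝ) := by
    have : 1 ≤ t - k := by omega
    exact_mod_cast Nat.lt_of_lt_of_le Nat.zero_lt_one this
  unfold tropTerm gCoeff gExp sigm
  simp only [Sum.elim_inl, PiLp.toLp_apply]
  congr 1
  · rw [Complex.norm_natCast]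
  · have hsum : (∑ j : Fin k, ((if (j : ℕ) = 0 then ((i : ℕ) : ℤ) else 0 : ℤ) : ℝ)
        * (if (j : ℕ) = 0 then Real.log (t - k : ℕ) else -N))
        = (i : ℕ) * Real.log ((t - k : ℕ) : ℝ) := by
      rw [Finset.sum_eq_single (⟨0, by omega⟩ : Fin k)]
      · simp
      · intro j _ hj
        have hj0 : (j : ℕ) ≠ 0 := fun h => hj (Fin.ext h)
        simp [hj0]
      · simp
    rw [hsum, ← Real.log_pow, Real.exp_log (by positivity)]

lemma trop_inr (k t : ℕ) (N : ℝ) (hk : 2 ≤ k) (i : Fin (k - 1)) :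
    tropTerm (gCoeff t k) (gExp t k) (sigm k t N) (Sum.inr i) = Real.exp (-N) := by
  unfold tropTerm gCoeff gExp sigm
  simp only [Sum.elim_inr, norm_one, one_mul]
  congr 1
  rw [Finset.sum_eq_single (⟨(i : ℕ) + 1, by have := i.isLt; omega⟩ : Fin k)]
  · simp
  · intro j _ hj
    have hj0 : (j : ℕ) ≠ (i : ℕ) + 1 := fun h => hj (Fin.ext h)
    simp [hj0]
  · simp

lemma sigm_mem (k t : ℕ) (N : ℝ) (hk : 2 ≤ k) (htk : k + 1 ≤ t) (hN : 0 ≤ N) :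
    sigm k t N ∈ ArchTrop (gCoeff t k) (gExp t k) := by
  set m := t - k with hmdef
  have hm : 1 ≤ m := by omega
  refine ⟨Sum.inl ⟨m, by omega⟩, Sum.inl ⟨m - 1, by omega⟩, ?_, ?_, ?_⟩
  · intro h
    have := Sum.inl.inj h
    have : m = m - 1 := congrArg Fin.val this
    omega
  · intro l
    rw [trop_inl k t N hk htk]
    simp only [← hmdef, Nat.choose_self, Nat.cast_one, one_mul]
    match l with
    | Sum.inl i =>
      rw [trop_inl k t N hk htk]
      simp only [← hmdef]
      have key : m.choose i * m ^ (i : ℕ) ≤ m ^ m := by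
        have hi : (i : ℕ) ≤ m := by have := i.isLt; omega
        have h1 : m.choose i ≤ m ^ (m - (i : ℕ)) := by
          calc m.choose i = m.choose (m - (m - (i:ℕ))) := by
                congr 1; omega
            _ = m.choose (m - (i:ℕ)) := Nat.choose_symm (by omega)
            _ ≤ m ^ (m - (i:ℕ)) := Nat.choose_le_pow _ _
        calc m.choose i * m ^ (i:ℕ) ≤ m ^ (m - (i:ℕ)) * m ^ (i:ℕ) :=
              Nat.mul_le_mul_right _ h1
          _ = m ^ m := by rw [← pow_add]; congr 1; omega
      exact_mod_cast key
    | Sum.inr i =>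
      rw [trop_inr k t N hk]
      calc Real.exp (-N) ≤ 1 := Real.exp_le_one_iff.mpr (by linarith)
        _ ≤ ((m : ℝ)) ^ (m : ℕ) := one_le_pow₀ (by exact_mod_cast hm)
  · rw [trop_inl k t N hk htk, trop_inl k t N hk htk]
    simp only [← hmdef, Nat.choose_self, Nat.cast_one, one_mul]
    have h2 : m.choose (m - 1) = m := by
      rw [← Nat.choose_symm (by omega : m - 1 ≤ m)]
      have : m - (m - 1) = 1 := by omega
      rw [this, Nat.choose_one_right]
    rw [h2]
    have : (m : ℝ) ^ m = m * (m:ℝ) ^ (m - 1) := by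
      rw [← pow_succ']
      congr 1; omega
    rw [this]

lemma amoeba_far (k t : ℕ) (hk : 2 ≤ k) (htk : k + 1 ≤ t) (N δ : ℝ) (hN : 0 ≤ N)
    (hδ0 : 0 < δ) (hδ1 : δ < 1)
    (hbig : ((k - 1 : ℕ) : ℝ) * ((t - k : ℕ) : ℝ) * Real.exp (-N) ≤ δ ^ (t - k)) :
    ∀ ρ ∈ Amoeba (gCoeff t k) (gExp t k),
      Real.log ((t - k : ℕ) : ℝ) + Real.log (1 - δ) ≤ dist (sigm k t N) ρ := by
  set m := t - k with hmdef
  have hm : 1 ≤ m := by omega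
  have hmR : (1 : ℝ) ≤ (m : ℝ) := by exact_mod_cast hm
  have hlogm : 0 ≤ Real.log (m : ℝ) := Real.log_nonneg hmR
  have hlog1δ : Real.log (1 - δ) ≤ 0 :=
    Real.log_nonpos (by linarith) (by linarith)
  rintro ρ ⟨x, hx0, hfx, rfl⟩
  by_cases hcase : ∀ j : Fin k, 0 < (j : ℕ) →
      Real.log (‖x j‖) ≤ -N + Real.log (m : ℝ)
  · -- all the other coordinates are small
    set x0 : ℂ := x ⟨0, by omega⟩ with hx0def
    have habs1 : ‖x0 + 1‖ ^ m ≤ δ ^ m := by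
      have heq : (x0 + 1) ^ m
          = -(∑ i ∈ Finset.univ.filter (fun j : Fin k => 0 < (j : ℕ)), x i) := by
        have := eval_g k t hk htk x
        rw [hfx] at this
        rw [← hmdef] at this
        linear_combination -this
      have h1 : ‖x0 + 1‖ ^ m
          = ‖∑ i ∈ Finset.univ.filter (fun j : Fin k => 0 < (j : ℕ)), x i‖ := by
        rw [← norm_pow, heq, norm_neg]
      have h2 : ‖∑ i ∈ Finset.univ.filter (fun j : Fin k => 0 < (j : ℕ)), x i‖
          ≤ ∑ i ∈ Finset.univ.filter (fun j : Fin k => 0 < (j : ℕ)), ‖x i‖ :=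
        norm_sum_le _ _
      have h3 : ∑ i ∈ Finset.univ.filter (fun j : Fin k => 0 < (j : ℕ)), ‖x i‖
          ≤ ((k - 1 : ℕ) : ℝ) * ((m : ℕ) : ℝ) * Real.exp (-N) := by
        rw [filter_sum k hk (fun i => ‖x i‖)]
        have hterm : ∀ i : Fin (k - 1),
            ‖x ⟨(i : ℕ) + 1, by have := i.isLt; omega⟩‖
              ≤ (m : ℝ) * Real.exp (-N) := by
          intro i
          have hj : 0 < ((⟨(i : ℕ) + 1, by have := i.isLt; omega⟩ : Fin k) : ℕ) := by simp
          have hle := hcase _ hj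
          have hpos : 0 < ‖x ⟨(i : ℕ) + 1, by have := i.isLt; omega⟩‖ :=
            norm_pos_iff.mpr (hx0 _)
          calc ‖x ⟨(i : ℕ) + 1, by have := i.isLt; omega⟩‖
              = Real.exp (Real.log (‖x ⟨(i : ℕ) + 1, by have := i.isLt; omega⟩‖)) :=
                (Real.exp_log hpos).symm
            _ ≤ Real.exp (-N + Real.log (m : ℝ)) := Real.exp_le_exp.mpr hle
            _ = (m : ℝ) * Real.exp (-N) := by
                rw [Real.exp_add, Real.exp_log (by linarith), mul_comm]
        calc ∑ i : Fin (k - 1), ‖x ⟨(i : ℕ) + 1, by have := i.isLt; omega⟩‖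
            ≤ ∑ _i : Fin (k - 1), (m : ℝ) * Real.exp (-N) :=
              Finset.sum_le_sum (fun i _ => hterm i)
          _ = ((k - 1 : ℕ) : ℝ) * ((m : ℕ) : ℝ) * Real.exp (-N) := by
              rw [Finset.sum_const, Finset.card_univ, Fintype.card_fin, nsmul_eq_mul]
              ring
      calc ‖x0 + 1‖ ^ m
          ≤ ((k - 1 : ℕ) : ℝ) * ((m : ℕ) : ℝ) * Real.exp (-N) := by
            rw [h1]; exact h2.trans h3
        _ ≤ δ ^ m := hbig
    have habs : ‖x0 + 1‖ ≤ δ :=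
      le_of_pow_le_pow_left₀ (by omega) hδ0.le habs1
    have hlow : 1 - δ ≤ ‖x0‖ := by
      have h := norm_add_le (x0 + 1) (-x0)
      simp only [add_neg_cancel_comm, norm_one, norm_neg] at h
      linarith
    have hhigh : ‖x0‖ ≤ 1 + δ := by
      have h := norm_add_le (x0 + 1) (-1)
      have he : (x0 + 1) + (-1) = x0 := by ring
      rw [he] at h
      simp only [norm_neg, norm_one] at h
      linarith
    have hρ0low : Real.log (1 - δ) ≤ Real.log (‖x0‖) :=
      Real.log_le_log (by linarith) hlow
    have hρ0high : Real.log (‖x0‖) ≤ Real.log (1 + δ) :=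
      Real.log_le_log (norm_pos_iff.mpr (hx0 _)) hhigh
    have hkey : Real.log (1 - δ) + Real.log (1 + δ) ≤ 0 := by
      rw [← Real.log_mul (by linarith) (by linarith)]
      apply Real.log_nonpos (by nlinarith) (by nlinarith)
    have hcd := coord_le_dist (sigm k t N) (LogAbs x) ⟨0, by omega⟩
    have hσ0 : sigm k t N ⟨0, by omega⟩ = Real.log ((m : ℕ) : ℝ) := by
      unfold sigm; simp [hmdef]
    have hL0 : LogAbs x ⟨0, by omega⟩ = Real.log (‖x0‖) := rfl
    rw [hσ0, hL0] at hcd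
    have : Real.log ((m : ℕ) : ℝ) - Real.log (‖x0‖)
        ≤ |Real.log ((m : ℕ) : ℝ) - Real.log (‖x0‖)| := le_abs_self _
    linarith
  · -- some coordinate of ρ is large: distance exceeds log m outright
    push_neg at hcase
    obtain ⟨j, hj0, hjlarge⟩ := hcase
    have hcd := coord_le_dist (sigm k t N) (LogAbs x) j
    have hσj : sigm k t N j = -N := by
      unfold sigm
      have : (j : ℕ) ≠ 0 := by omega
      simp [this]
    have hLj : LogAbs x j = Real.log (‖x j‖) := rfl
    rw [hσj, hLj] at hcd
    have h1 : Real.log (‖x j‖) + N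
        ≤ |(-N) - Real.log (‖x j‖)| := by
      rw [abs_sub_comm]
      have := le_abs_self (Real.log (‖x j‖) - (-N))
      linarith
    linarith
/-- For integers `k ≥ 2` and `t ≥ k+1`, the polynomial
`g_{t,k}(x) = (x_1+1)^{t-k} + x_2 + ⋯ + x_k` (which has exactly `t` monomial terms) satisfies
`Δ(Amoeba(g_{t,k}), ArchTrop(g_{t,k})) ≥ log(t-k)`; in particular, for every `ε > 0` there is
a point of `ArchTrop(g_{t,k})` whose distance to every point of `Amoeba(g_{t,k})` exceeds
`log(t-k) - ε`. -/
theorem stmt5 (k t : ℕ) (hk : 2 ≤ k) (htk : k + 1 ≤ t) :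
    (∀ x : Fin k → ℂ,
        lpoly (gCoeff t k) (gExp t k) x =
          (x ⟨0, by omega⟩ + 1) ^ (t - k) +
            ∑ i ∈ Finset.univ.filter (fun j : Fin k => 0 < (j : ℕ)), x i) ∧
    ENNReal.ofReal (Real.log ((t : ℝ) - k)) ≤
      Metric.hausdorffEDist (Amoeba (gCoeff t k) (gExp t k))
        (ArchTrop (gCoeff t k) (gExp t k)) ∧
    ∀ ε : ℝ, 0 < ε → ∃ σ ∈ ArchTrop (gCoeff t k) (gExp t k),
      ∀ ρ ∈ Amoeba (gCoeff t k) (gExp t k), Real.log ((t : ℝ) - k) - ε < dist σ ρ := by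
  have hm : 1 ≤ t - k := by omega
  have hmR : (1 : ℝ) ≤ ((t - k : ℕ) : ℝ) := by exact_mod_cast hm
  have hcast : ((t - k : ℕ) : ℝ) = (t : ℝ) - k := by
    push_cast [Nat.cast_sub (by omega : k ≤ t)]
    ring
  have hkm1 : (0 : ℝ) < ((k - 1 : ℕ) : ℝ) := by
    have : 1 ≤ k - 1 := by omega
    exact_mod_cast Nat.lt_of_lt_of_le Nat.zero_lt_one this
  -- Part 3 first (we use it for Part 2)
  have part3 : ∀ ε : ℝ, 0 < ε → ∃ σ ∈ ArchTrop (gCoeff t k) (gExp t k),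
      ∀ ρ ∈ Amoeba (gCoeff t k) (gExp t k), Real.log ((t : ℝ) - k) - ε < dist σ ρ := by
    intro ε hε
    set δ : ℝ := 1 - Real.exp (-(ε / 2)) with hδdef
    have hδ0 : 0 < δ := by
      have : Real.exp (-(ε / 2)) < 1 := Real.exp_lt_one_iff.mpr (by linarith)
      simp only [hδdef]; linarith
    have hδ1 : δ < 1 := by
      have := Real.exp_pos (-(ε / 2))
      simp only [hδdef]; linarith
    have hδm : 0 < δ ^ (t - k) := pow_pos hδ0 _
    set q : ℝ := δ ^ (t - k) / (((k - 1 : ℕ) : ℝ) * ((t - k : ℕ) : ℝ)) with hqdef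
    have hq : 0 < q := by
      apply div_pos hδm
      apply mul_pos hkm1 (by linarith)
    set N : ℝ := max 0 (-Real.log q) with hNdef
    have hN0 : 0 ≤ N := le_max_left _ _
    have hNlog : -N ≤ Real.log q := by
      have := le_max_right 0 (-Real.log q)
      simp only [hNdef]; linarith
    have hbig : ((k - 1 : ℕ) : ℝ) * ((t - k : ℕ) : ℝ) * Real.exp (-N) ≤ δ ^ (t - k) := by
      have h1 : Real.exp (-N) ≤ q := by
        calc Real.exp (-N) ≤ Real.exp (Real.log q) := Real.exp_le_exp.mpr hNlog
          _ = q := Real.exp_log hq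
      have h2 : ((k - 1 : ℕ) : ℝ) * ((t - k : ℕ) : ℝ) * q = δ ^ (t - k) := by
        have hc : ((k - 1 : ℕ) : ℝ) * ((t - k : ℕ) : ℝ) ≠ 0 :=
          ne_of_gt (mul_pos hkm1 (by linarith))
        rw [hqdef, mul_comm]
        exact div_mul_cancel₀ _ hc
      calc ((k - 1 : ℕ) : ℝ) * ((t - k : ℕ) : ℝ) * Real.exp (-N)
          ≤ ((k - 1 : ℕ) : ℝ) * ((t - k : ℕ) : ℝ) * q := by
            apply mul_le_mul_of_nonneg_left h1
            positivity
        _ = δ ^ (t - k) := h2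
    refine ⟨sigm k t N, sigm_mem k t N hk htk hN0, ?_⟩
    intro ρ hρ
    have hfar := amoeba_far k t hk htk N δ hN0 hδ0 hδ1 hbig ρ hρ
    have hlog1δ : Real.log (1 - δ) = -(ε / 2) := by
      have : 1 - δ = Real.exp (-(ε / 2)) := by simp [hδdef]
      rw [this, Real.log_exp]
    rw [hlog1δ, hcast] at hfar
    linarith
  refine ⟨eval_g k t hk htk, ?_, part3⟩
  -- Part 2
  set L : ℝ := Real.log ((t : ℝ) - k) with hLdef
  rcases le_or_gt L 0 with hL | hL
  · rw [ENNReal.ofReal_of_nonpos hL]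
    exact zero_le
  · by_contra hH
    push_neg at hH
    have hHne : Metric.hausdorffEDist (Amoeba (gCoeff t k) (gExp t k))
        (ArchTrop (gCoeff t k) (gExp t k)) ≠ ⊤ := (hH.trans_le le_top).ne
    set H := Metric.hausdorffEDist (Amoeba (gCoeff t k) (gExp t k))
        (ArchTrop (gCoeff t k) (gExp t k)) with hHdef
    have hr : H.toReal < L := (ENNReal.lt_ofReal_iff_toReal_lt hHne).mp hH
    have hr0 : 0 ≤ H.toReal := ENNReal.toReal_nonneg
    set ε : ℝ := (L - H.toReal) / 2 with hεdef
    have hε : 0 < ε := by simp only [hεdef]; linarith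
    obtain ⟨σ, hσ, hdist⟩ := part3 ε hε
    have hinf : ENNReal.ofReal (L - ε) ≤ H := by
      calc ENNReal.ofReal (L - ε)
          ≤ Metric.infEDist σ (Amoeba (gCoeff t k) (gExp t k)) := by
            rw [Metric.le_infEDist]
            intro ρ hρ
            rw [edist_dist]
            exact ENNReal.ofReal_le_ofReal (hdist ρ hρ).le
        _ ≤ Metric.hausdorffEDist (ArchTrop (gCoeff t k) (gExp t k))
              (Amoeba (gCoeff t k) (gExp t k)) :=
            Metric.infEDist_le_hausdorffEDist_of_mem hσ
        _ = H := by rw [hHdef, Metric.hausdorffEDist_comm]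
    have : L - ε ≤ H.toReal := (ENNReal.ofReal_le_iff_le_toReal hHne).mp hinf
    simp only [hεdef] at this
    linarith
end

section
/- Let f_1, …, f_m be Laurent polynomials in n complex variables, where f_j has exactly t_j ≥ 2 monomial terms for each j. If ζ ∈ (ℂ∖{0})^n is a common root, i.e., f_1(ζ) = ⋯ = f_m(ζ) = 0, then Log|ζ| ∈ ⋂_{j=1}^m ( ArchTrop(f_j) + B̄(0, log(t_j−1)) ), where B̄(0,r) denotes the closed Euclidean ball of radius r centered at the origin of ℝ^n; i.e., for each j there exists σ_j ∈ ArchTrop(f_j) with |Log|ζ| − σ_j| ≤ log(t_j − 1). -/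
open Pointwise

open Finset in
lemma key_lemma {n tt : ℕ} (ht : 2 ≤ tt) (c : Fin tt → ℂ) (a : Fin tt → Fin n → ℤ)
    (ha : Function.Injective a) (hc : ∀ i, c i ≠ 0)
    (ζ : Fin n → ℂ) (hζ : ∀ j, ζ j ≠ 0) (hroot : lpoly c a ζ = 0) :
    ∃ σ ∈ ArchTrop c a, dist (LogAbs ζ) σ ≤ Real.log ((tt : ℝ) - 1) := by
  set v : EuclideanSpace ℝ (Fin n) := LogAbs ζ with hv
  set T : Fin tt → ℝ := tropTerm c a v with hT
  have hTpos : ∀ i, 0 < T i := fun i =>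
    mul_pos (norm_pos_iff.mpr (hc i)) (Real.exp_pos _)
  have habs : ∀ i, ‖c i * ∏ j, ζ j ^ a i j‖ = T i := by
    intro i
    rw [norm_mul, norm_prod]
    congr 1
    have hterm : ∀ j, ‖ζ j ^ a i j‖ = Real.exp ((a i j : ℝ) * v j) := by
      intro j
      rw [norm_zpow]
      have hpos : 0 < ‖ζ j‖ := norm_pos_iff.mpr (hζ j)
      rw [← Real.rpow_intCast, Real.rpow_def_of_pos hpos, mul_comm]
      rfl
    rw [Finset.prod_congr rfl (fun j _ => hterm j), ← Real.exp_sum]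
  obtain ⟨i0, -, hi0⟩ := Finset.exists_max_image univ T ⟨(⟨0, by omega⟩ : Fin tt), mem_univ _⟩
  have hne : (univ.erase i0).Nonempty := by
    rw [← Finset.card_pos, Finset.card_erase_of_mem (mem_univ i0), Finset.card_univ,
      Fintype.card_fin]
    omega
  obtain ⟨k, hkmem, hk⟩ := Finset.exists_max_image (univ.erase i0) T hne
  have hki0 : k ≠ i0 := (Finset.mem_erase.mp hkmem).1
  -- Step B : T i0 ≤ (tt - 1) * T k
  have hsum : T i0 ≤ ((tt : ℝ) - 1) * T k := by
    have h0 : ∑ i ∈ univ.erase i0, (c i * ∏ j, ζ j ^ a i j) + c i0 * ∏ j, ζ j ^ a i0 j = 0 := by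
      rw [Finset.sum_erase_add _ _ (mem_univ i0)]; exact hroot
    have h1 : c i0 * ∏ j, ζ j ^ a i0 j = -∑ i ∈ univ.erase i0, (c i * ∏ j, ζ j ^ a i j) :=
      eq_neg_of_add_eq_zero_right h0
    calc T i0 = ‖c i0 * ∏ j, ζ j ^ a i0 j‖ := (habs i0).symm
      _ = ‖∑ i ∈ univ.erase i0, (c i * ∏ j, ζ j ^ a i j)‖ := by
          rw [h1, norm_neg]
      _ ≤ ∑ i ∈ univ.erase i0, ‖c i * ∏ j, ζ j ^ a i j‖ :=
          norm_sum_le _ _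
      _ = ∑ i ∈ univ.erase i0, T i := Finset.sum_congr rfl fun i _ => habs i
      _ ≤ (univ.erase i0).card • T k := Finset.sum_le_card_nsmul _ _ _ fun i hi => hk i hi
      _ = ((tt : ℝ) - 1) * T k := by
          rw [Finset.card_erase_of_mem (mem_univ i0), Finset.card_univ, Fintype.card_fin,
            nsmul_eq_mul, Nat.cast_sub (by omega)]
          norm_num
  -- direction vector
  set d : EuclideanSpace ℝ (Fin n) := WithLp.toLp 2 (fun l => ((a i0 l - a k l : ℤ) : ℝ)) with hd
  have hdne : d ≠ 0 := by
    intro h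
    apply hki0
    apply ha
    funext l
    have : ((a i0 l - a k l : ℤ) : ℝ) = 0 := congrArg (fun x : EuclideanSpace ℝ (Fin n) => x l) h
    have : (a i0 l - a k l : ℤ) = 0 := by exact_mod_cast this
    omega
  have hdnorm_pos : 0 < ‖d‖ := norm_pos_iff.mpr hdne
  have hd2 : ‖d‖ ^ 2 = ∑ l, d l ^ 2 := by
    rw [EuclideanSpace.norm_eq, Real.sq_sqrt (Finset.sum_nonneg fun l _ => sq_nonneg _)]
    exact Finset.sum_congr rfl fun l _ => by rw [Real.norm_eq_abs, sq_abs]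
  have hdnorm1 : 1 ≤ ‖d‖ := by
    obtain ⟨l, hl⟩ : ∃ l, a i0 l ≠ a k l := by
      by_contra h
      push_neg at h
      exact hki0.symm (ha (funext h))
    have h1 : (1 : ℝ) ≤ |d l| := by
      have : d l = ((a i0 l - a k l : ℤ) : ℝ) := rfl
      rw [this, ← Int.cast_abs]
      exact_mod_cast Int.one_le_abs (by omega)
    calc (1:ℝ) ≤ |d l| := h1
      _ = Real.sqrt (d l ^ 2) := (Real.sqrt_sq_eq_abs _).symm
      _ ≤ Real.sqrt (∑ l', d l' ^ 2) := Real.sqrt_le_sqrt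
          (Finset.single_le_sum (fun l' _ => sq_nonneg (d l')) (mem_univ l))
      _ = ‖d‖ := by rw [← hd2, Real.sqrt_sq hdnorm_pos.le]
  set u : EuclideanSpace ℝ (Fin n) := (-(‖d‖ ^ 2)⁻¹ : ℝ) • d with hu
  set A : Fin tt → ℝ := fun l => ∑ j, (a l j : ℝ) * u j with hA
  -- shift formula
  have hshift : ∀ (s : ℝ) (l : Fin tt),
      tropTerm c a (v + s • u) l = T l * Real.exp (s * A l) := by
    intro s l
    rw [hT, tropTerm, tropTerm, mul_assoc, ← Real.exp_add]
    congr 2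
    rw [hA]
    have : ∀ j, (a l j : ℝ) * (v + s • u) j = (a l j : ℝ) * v j + s * ((a l j : ℝ) * u j) := by
      intro j
      have : (v + s • u) j = v j + s * u j := by
        simp [PiLp.add_apply, PiLp.smul_apply, smul_eq_mul]
      rw [this]; ring
    rw [Finset.sum_congr rfl fun j _ => this j, Finset.sum_add_distrib, Finset.mul_sum]
  have hAdiff : A i0 - A k = -1 := by
    rw [hA]
    have : ∀ j : Fin n, (a i0 j : ℝ) * u j - (a k j : ℝ) * u j
        = (-(‖d‖ ^ 2)⁻¹) * (d j * d j) := by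
      intro j
      have hdj : d j = ((a i0 j : ℝ) - (a k j : ℝ)) := by
        simp [hd]
      have huj : u j = (-(‖d‖ ^ 2)⁻¹) * d j := by
        simp [hu, PiLp.smul_apply, smul_eq_mul]
      rw [huj, hdj]; ring
    rw [← Finset.sum_sub_distrib, Finset.sum_congr rfl fun j _ => this j, ← Finset.mul_sum]
    have : ∑ j, d j * d j = ‖d‖ ^ 2 := by
      rw [hd2]; exact Finset.sum_congr rfl fun j _ => (sq (d j)).symm
    rw [this, neg_mul, inv_mul_cancel₀ (pow_pos hdnorm_pos 2).ne']
  set r : ℝ := Real.log (T i0 / T k) with hr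
  have hr0 : 0 ≤ r := Real.log_nonneg ((one_le_div (hTpos k)).mpr (hi0 k (mem_univ k)))
  have hrle : r ≤ Real.log ((tt : ℝ) - 1) := by
    apply Real.log_le_log (div_pos (hTpos i0) (hTpos k))
    rw [div_le_iff₀ (hTpos k)]
    exact hsum
  -- the function G
  set G : ℝ → ℝ := fun s =>
    (univ.erase i0).sup' hne (fun l => tropTerm c a (v + s • u) l)
      - tropTerm c a (v + s • u) i0 with hG
  have hGcont : Continuous G := by
    apply Continuous.sub
    · apply Continuous.finset_sup'_apply hne
      intro l _
      have : (fun s : ℝ => tropTerm c a (v + s • u) l)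
          = fun s => T l * Real.exp (s * A l) := funext fun s => hshift s l
      rw [this]
      exact continuous_const.mul ((continuous_id.mul continuous_const).rexp)
    · have : (fun s : ℝ => tropTerm c a (v + s • u) i0)
          = fun s => T i0 * Real.exp (s * A i0) := funext fun s => hshift s i0
      rw [this]
      exact continuous_const.mul ((continuous_id.mul continuous_const).rexp)
  have hG0 : G 0 ≤ 0 := by
    rw [hG]
    simp only [sub_nonpos]
    apply Finset.sup'_le
    intro l _
    rw [hshift 0 l, hshift 0 i0]
    simp only [zero_mul, Real.exp_zero, mul_one]
    exact hi0 l (mem_univ l)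
  have hGr : 0 ≤ G r := by
    rw [hG, sub_nonneg]
    have hkr : tropTerm c a (v + r • u) k = tropTerm c a (v + r • u) i0 := by
      rw [hshift r k, hshift r i0]
      have hTi0 : T i0 = T k * Real.exp r := by
        rw [hr, Real.exp_log (div_pos (hTpos i0) (hTpos k)), mul_div_cancel₀ _ (hTpos k).ne']
      rw [hTi0, mul_assoc, ← Real.exp_add]
      congr 2
      linear_combination (-r) * hAdiff
    rw [← hkr]
    exact Finset.le_sup' _ hkmem
  obtain ⟨s₀, hs₀mem, hs₀⟩ : ∃ s₀ ∈ Set.Icc (0:ℝ) r, G s₀ = 0 := by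
    have := intermediate_value_Icc hr0 hGcont.continuousOn
    have h0mem : (0:ℝ) ∈ Set.Icc (G 0) (G r) := ⟨hG0, hGr⟩
    obtain ⟨s₀, hs₀, hGs₀⟩ := this h0mem
    exact ⟨s₀, hs₀, hGs₀⟩
  refine ⟨v + s₀ • u, ?_, ?_⟩
  · -- membership in ArchTrop
    obtain ⟨l, hlmem, hl⟩ := Finset.exists_mem_eq_sup' hne
      (fun l => tropTerm c a (v + s₀ • u) l)
    have hsup : (univ.erase i0).sup' hne (fun l => tropTerm c a (v + s₀ • u) l)
        = tropTerm c a (v + s₀ • u) i0 := by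
      have h2 : (univ.erase i0).sup' hne (fun l => tropTerm c a (v + s₀ • u) l)
          - tropTerm c a (v + s₀ • u) i0 = 0 := hs₀
      linarith
    refine ⟨i0, l, fun h => (Finset.mem_erase.mp hlmem).1 h.symm, ?_, ?_⟩
    · intro l'
      by_cases h : l' = i0
      · subst h; exact le_refl _
      · calc tropTerm c a (v + s₀ • u) l'
            ≤ (univ.erase i0).sup' hne (fun l => tropTerm c a (v + s₀ • u) l) :=
              Finset.le_sup' _ (Finset.mem_erase.mpr ⟨h, mem_univ l'⟩)
          _ = _ := hsup
    · rw [← hsup, hl]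
  · -- distance bound
    have : dist v (v + s₀ • u) = ‖s₀ • u‖ := by
      rw [dist_eq_norm]
      simp
    rw [hv] at this ⊢
    rw [this, norm_smul, Real.norm_eq_abs, abs_of_nonneg hs₀mem.1]
    have hunorm : ‖u‖ = ‖d‖⁻¹ := by
      rw [hu, norm_smul, Real.norm_eq_abs, abs_neg, abs_inv, abs_of_nonneg (sq_nonneg _),
        sq, mul_inv, mul_assoc, inv_mul_cancel₀ hdnorm_pos.ne', mul_one]
    rw [hunorm]
    have h1 : s₀ * ‖d‖⁻¹ ≤ s₀ := by
      calc s₀ * ‖d‖⁻¹ ≤ s₀ * 1 := by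
            apply mul_le_mul_of_nonneg_left _ hs₀mem.1
            rw [inv_le_one_iff₀]; right; exact hdnorm1
        _ = s₀ := mul_one s₀
    linarith [hs₀mem.2]

/-- If `ζ ∈ (ℂ∖{0})^n` is a common root of Laurent polynomials `f_1, …, f_m`, where `f_j` has
exactly `t_j ≥ 2` monomial terms, then
`Log|ζ| ∈ ⋂_j (ArchTrop(f_j) + B̄(0, log(t_j - 1)))`; i.e., for each `j` there is
`σ_j ∈ ArchTrop(f_j)` with `|Log|ζ| - σ_j| ≤ log(t_j - 1)`. -/
theorem stmt6 {n m : ℕ} (hn : 1 ≤ n)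
    (t : Fin m → ℕ) (ht : ∀ j, 2 ≤ t j)
    (c : (j : Fin m) → Fin (t j) → ℂ) (a : (j : Fin m) → Fin (t j) → Fin n → ℤ)
    (ha : ∀ j, Function.Injective (a j)) (hc : ∀ j i, c j i ≠ 0)
    (ζ : Fin n → ℂ) (hζ : ∀ j, ζ j ≠ 0) (hroot : ∀ j, lpoly (c j) (a j) ζ = 0) :
    LogAbs ζ ∈ ⋂ j, (ArchTrop (c j) (a j) +
        Metric.closedBall (0 : EuclideanSpace ℝ (Fin n)) (Real.log ((t j : ℝ) - 1))) ∧
    ∀ j, ∃ σ ∈ ArchTrop (c j) (a j), dist (LogAbs ζ) σ ≤ Real.log ((t j : ℝ) - 1) := by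
  have key : ∀ j, ∃ σ ∈ ArchTrop (c j) (a j),
      dist (LogAbs ζ) σ ≤ Real.log ((t j : ℝ) - 1) :=
    fun j => key_lemma (ht j) (c j) (a j) (ha j) (hc j) ζ hζ (hroot j)
  refine ⟨?_, key⟩
  rw [Set.mem_iInter]
  intro j
  obtain ⟨σ, hσ, hdist⟩ := key j
  rw [Set.mem_add]
  refine ⟨σ, hσ, LogAbs ζ - σ, ?_, by abel⟩
  rw [Metric.mem_closedBall, dist_zero_right, ← dist_eq_norm]
  exact hdist
end
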